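/- Let M be an irreducible Markov chain on a countable state space V, let A ⊆ W be a tail event, let ε > 0 and κ ∈ (0,1] with ε/κ ≤ 1/2, and let U ⊆ V. If v ∈ A_ε and the chain started at v visits U with probability at least κ, then there is a finite path v = v_0, v_1, …, v_m with p(v_i, v_{i+1}) > 0 for each i < m, v_m ∈ U, and v_i ∈ A_{ε/κ} for all i. The analogous statement holds with Z in place of A. -/

import Mathlib

open MeasureTheory Filter Set Topology
open scoped Classical

/-- An irreducible Markov chain on a countable state space `V`, given together with
its family of path-space laws `μ z` (the law of the chain started at `z`),
characterised on cylinder sets by the transition probabilities. -/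
structure MarkovChain (V : Type*) [Countable V] [MeasurableSpace V] where
  /-- transition probabilities -/
  p : V → V → ℝ
  p_nonneg : ∀ x y, 0 ≤ p x y
  p_row_sum : ∀ x, HasSum (p x) 1
  irred : ∀ x y : V, ∃ (n : ℕ) (w : ℕ → V),
    w 0 = x ∧ w n = y ∧ ∀ i < n, 0 < p (w i) (w (i + 1))
  /-- the law of the chain started at `z`, on the path space `ℕ → V` -/
  μ : V → Measure (ℕ → V)
  μ_prob : ∀ z, IsProbabilityMeasure (μ z)
  μ_cyl : ∀ (z : V) (n : ℕ) (w : ℕ → V),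
    (μ z {ω : ℕ → V | ∀ i ≤ n, ω i = w i}).toReal =
      if w 0 = z then ∏ i ∈ Finset.range n, p (w i) (w (i + 1)) else 0

variable {V : Type*} [Countable V] [MeasurableSpace V]

/-- `h : V → ℝ` is harmonic if `h x = ∑_y p x y * h y` for every `x`. -/
def IsHarmonic (M : MarkovChain V) (h : V → ℝ) : Prop :=
  ∀ x, HasSum (fun y => M.p x y * h y) (h x)

/-- The event `1^s` that the values of `s` along the trajectory converge to `1`. -/
def oneEvent (s : V → ℝ) : Set (ℕ → V) :=
  {ω | Tendsto (fun n => s (ω n)) atTop (𝓝 1)}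

/-- The event `0^s` that the values of `s` along the trajectory converge to `0`. -/
def zeroEvent (s : V → ℝ) : Set (ℕ → V) :=
  {ω | Tendsto (fun n => s (ω n)) atTop (𝓝 0)}

/-- A harmonic function `s : V → [0,1]` is sharp if, for every starting state,
the values of `s` along the trajectory of the chain converge to `0` or `1`
almost surely. -/
def IsSharp (M : MarkovChain V) (s : V → ℝ) : Prop :=
  IsHarmonic M s ∧ (∀ x, s x ∈ Set.Icc (0 : ℝ) 1) ∧
  ∀ z, ∀ᵐ ω ∂ M.μ z,
    Tendsto (fun n => s (ω n)) atTop (𝓝 0) ∨ Tendsto (fun n => s (ω n)) atTop (𝓝 1)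

/-- A tail event: a measurable event invariant under deleting the first step. -/
def IsTailEvent (A : Set (ℕ → V)) : Prop :=
  MeasurableSet A ∧ (fun ω : ℕ → V => fun n => ω (n + 1)) ⁻¹' A = A

/-- An `M`-boundary: a measurable space `N` with measures `ν z`, `z ∈ V`, and a
measurable, shift-invariant, measure-preserving map `f` from path space to `N`. -/
structure MBoundary (M : MarkovChain V) (N : Type*) [MeasurableSpace N] where
  ν : V → Measure N
  f : (ℕ → V) → N
  f_meas : Measurable f
  shift_inv : ∀ ω : ℕ → V, f (fun n => ω (n + 1)) = f ω
  meas_pres : ∀ (z : V) (X : Set N), MeasurableSet X → ν z X = M.μ z (f ⁻¹' X)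

/-- The `M`-boundary is faithful to a sharp harmonic function `s` if some measurable
`X ⊆ N` satisfies `μ_z (1^s △ f⁻¹ X) = 0` for every `z`. -/
def Faithful {N : Type*} [MeasurableSpace N] (M : MarkovChain V) (B : MBoundary M N)
    (s : V → ℝ) : Prop :=
  ∃ X : Set N, MeasurableSet X ∧ ∀ z, M.μ z (symmDiff (oneEvent s) (B.f ⁻¹' X)) = 0

/-- The `M`-boundary is a realisation of the Poisson boundary: every bounded harmonic
function is the integral of an essentially unique bounded measurable function on `N`,
and conversely integrating any bounded measurable function on `N` gives a bounded
harmonic function. -/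
def IsRealisation {N : Type*} [MeasurableSpace N] (M : MarkovChain V)
    (B : MBoundary M N) : Prop :=
  (∀ h : V → ℝ, IsHarmonic M h → (∃ C, ∀ x, |h x| ≤ C) →
    ∃ hhat : N → ℝ, Measurable hhat ∧ (∃ C, ∀ η, |hhat η| ≤ C) ∧
      (∀ z, h z = ∫ η, hhat η ∂ B.ν z) ∧
      (∀ g : N → ℝ, Measurable g → (∃ C, ∀ η, |g η| ≤ C) →
        (∀ z, h z = ∫ η, g η ∂ B.ν z) → ∀ z, hhat =ᵐ[B.ν z] g)) ∧
  (∀ g : N → ℝ, Measurable g → (∃ C, ∀ η, |g η| ≤ C) →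
    (∃ C, ∀ z, |∫ η, g η ∂ B.ν z| ≤ C) ∧ IsHarmonic M (fun z => ∫ η, g η ∂ B.ν z))

/-- `A_r`: the set of states from which the tail event `A` holds with probability
greater than `1 - r`. -/
def tailBig (M : MarkovChain V) (A : Set (ℕ → V)) (r : ℝ) : Set V :=
  {v | (M.μ v A).toReal > 1 - r}

/-- `Z_r`: the set of states from which the tail event `A` holds with probability
less than `r`. -/
def tailSmall (M : MarkovChain V) (A : Set (ℕ → V)) (r : ℝ) : Set V :=
  {v | (M.μ v A).toReal < r}

/-- point cylinder -/
def cylSet (w : ℕ → V) (n : ℕ) : Set (ℕ → V) := {ω | ∀ i ≤ n, ω i = w i}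

lemma cyl_eq (M : MarkovChain V) (z : V) (n : ℕ) (w : ℕ → V) :
    M.μ z (cylSet w n) =
      ENNReal.ofReal (if w 0 = z then ∏ i ∈ Finset.range n, M.p (w i) (w (i + 1)) else 0) := by
  have := M.μ_prob z
  rw [← M.μ_cyl z n w, ENNReal.ofReal_toReal (measure_ne_top _ _)]
  rfl

lemma swap_preimage_eq (y y' : V) (hsep : ∀ S : Set V, MeasurableSet S → (y ∈ S ↔ y' ∈ S))
    (E : Set (ℕ → V)) (hE : MeasurableSet E) :
    (fun ω n => if n = 1 then Equiv.swap y y' (ω 1) else ω n) ⁻¹' E = E := by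
  set φ : (ℕ → V) → (ℕ → V) := fun ω n => if n = 1 then Equiv.swap y y' (ω 1) else ω n with hφ
  have hswapS : ∀ S : Set V, MeasurableSet S → Equiv.swap y y' ⁻¹' S = S := by
    intro S hS
    ext x
    rcases eq_or_ne x y with rfl | hxy
    · simp [Equiv.swap_apply_left, (hsep S hS)]
    rcases eq_or_ne x y' with rfl | hxy'
    · simp [Equiv.swap_apply_right, ← (hsep S hS)]
    · simp [Equiv.swap_apply_of_ne_of_ne hxy hxy']
  have hE' : MeasurableSet[MeasurableSpace.generateFrom
      {B : Set (ℕ → V) | ∃ (i : ℕ) (A : Set V), MeasurableSet A ∧ Function.eval i ⁻¹' A = B}] E := by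
    rw [← MeasurableSpace.pi_eq_generateFrom_projections]; exact hE
  refine MeasurableSpace.generateFrom_induction _ (fun s _ => φ ⁻¹' s = s) ?_ (by simp)
    (fun t _ ht => by show φ ⁻¹' tᶜ = tᶜ; rw [Set.preimage_compl, ht])
    (fun s _ hs => by show φ ⁻¹' (⋃ i, s i) = _; rw [Set.preimage_iUnion]; exact Set.iUnion_congr hs) E hE'
  rintro t ⟨n, S, hS, rfl⟩ -
  rcases eq_or_ne n 1 with rfl | hn
  · show φ ⁻¹' (Function.eval 1 ⁻¹' S) = _
    have : Function.eval 1 ∘ φ = (⇑(Equiv.swap y y')) ∘ (Function.eval 1) := by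
      funext ω; simp [hφ, Function.eval]
    rw [← Set.preimage_comp, this, Set.preimage_comp, hswapS S hS]
  · show φ ⁻¹' (Function.eval n ⁻¹' S) = _
    have : Function.eval n ∘ φ = Function.eval n := by
      funext ω; simp [hφ, hn, Function.eval]
    rw [← Set.preimage_comp, this]

lemma phi_outer (y y' : V) (hsep : ∀ S : Set V, MeasurableSet S → (y ∈ S ↔ y' ∈ S))
    (μ : Measure (ℕ → V)) (T : Set (ℕ → V)) :
    μ ((fun ω n => if n = 1 then Equiv.swap y y' (ω 1) else ω n) ⁻¹' T) ≤ μ T := by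
  set φ : (ℕ → V) → (ℕ → V) := fun ω n => if n = 1 then Equiv.swap y y' (ω 1) else ω n with hφ
  rw [measure_eq_iInf T]
  refine le_iInf fun E => le_iInf fun hTE => le_iInf fun hE => ?_
  have h1 : φ ⁻¹' E = E := swap_preimage_eq y y' hsep E hE
  calc μ (φ ⁻¹' T) ≤ μ (φ ⁻¹' E) := measure_mono (Set.preimage_mono hTE)
  _ = μ E := by rw [h1]

lemma singleton_meas (M : MarkovChain V) (y : V) : MeasurableSet ({y} : Set V) := by
  -- step 1: every other point is separated from y
  have hsep : ∀ y' : V, y' ≠ y → ∃ S : Set V, MeasurableSet S ∧ y ∈ S ∧ y' ∉ S := by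
    intro y' hy'
    by_contra hno
    push_neg at hno
    have hsep : ∀ S : Set V, MeasurableSet S → (y ∈ S ↔ y' ∈ S) := by
      intro S hS
      constructor
      · intro h
        by_contra h'
        exact h' (hno S hS h)
      · intro h
        by_contra h'
        exact (hno Sᶜ hS.compl h') h
    set φ : (ℕ → V) → (ℕ → V) := fun ω n => if n = 1 then Equiv.swap y y' (ω 1) else ω n with hφ
    have hφinv : ∀ T : Set (ℕ → V), φ ⁻¹' (φ ⁻¹' T) = T := by
      intro T
      rw [← Set.preimage_comp]
      have : φ ∘ φ = id := by
        funext ω n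
        simp only [Function.comp_apply, hφ, id_eq]
        rcases eq_or_ne n 1 with rfl | hn
        · simp
        · simp [hn]
      rw [this, Set.preimage_id]
    have hout : ∀ (μ : Measure (ℕ → V)) (T : Set (ℕ → V)), μ (φ ⁻¹' T) = μ T := by
      intro μ T
      refine le_antisymm (phi_outer y y' hsep μ T) ?_
      conv_lhs => rw [← hφinv T]
      exact phi_outer y y' hsep μ _
    -- the two-step cylinders to y and y'
    set wd : V → V → ℕ → V := fun z x i => if i = 0 then z else x with hwd
    have hcylY : ∀ z x : V, cylSet (wd z x) 1 = {ω : ℕ → V | ω 0 = z ∧ ω 1 = x} := by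
      intro z x
      ext ω
      constructor
      · intro h
        exact ⟨by simpa [hwd] using h 0 (by norm_num), by simpa [hwd] using h 1 le_rfl⟩
      · rintro ⟨h0, h1⟩ i hi
        interval_cases i
        · simpa [hwd] using h0
        · simpa [hwd] using h1
    have hcylval : ∀ z x : V, M.μ z (cylSet (wd z x) 1) = ENNReal.ofReal (M.p z x) := by
      intro z x
      rw [cyl_eq]
      simp [hwd]
    have hswapcyl : ∀ z : V, φ ⁻¹' (cylSet (wd z y) 1) = cylSet (wd z y') 1 := by
      intro z
      rw [hcylY, hcylY]
      ext ω
      simp only [Set.mem_preimage, Set.mem_setOf_eq, hφ]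
      constructor
      · rintro ⟨h0, h1⟩
        refine ⟨by simpa using h0, ?_⟩
        have : Equiv.swap y y' (ω 1) = y := by simpa using h1
        have := congrArg (Equiv.swap y y') this
        simpa [Equiv.swap_apply_left] using this
      · rintro ⟨h0, h1⟩
        refine ⟨by simpa using h0, by simp [h1, Equiv.swap_apply_right]⟩
    -- transition probabilities into y and y' agree
    have hp : ∀ z : V, M.p z y = M.p z y' := by
      intro z
      have h1 := hcylval z y
      have h2 := hcylval z y'
      have h3 := hout (M.μ z) (cylSet (wd z y) 1)
      rw [hswapcyl z] at h3
      have := h2 ▸ h1 ▸ h3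
      have h4 : (0:ℝ) ≤ M.p z y' := M.p_nonneg z y'
      have h5 : (0:ℝ) ≤ M.p z y := M.p_nonneg z y
      exact ((ENNReal.ofReal_eq_ofReal_iff h4 h5).1 this).symm
    -- find z with p z y > 0
    obtain ⟨n, w, hw0, hwn, hwpos⟩ := M.irred y' y
    have hn : n ≠ 0 := by
      rintro rfl
      exact hy' (hw0.symm.trans hwn)
    set z := w (n - 1) with hz
    have hc : 0 < M.p z y := by
      have h := hwpos (n - 1) (by omega)
      have : n - 1 + 1 = n := by omega
      rw [this, hwn] at h
      exact h
    set c := M.p z y with hcdef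
    -- total mass accounting
    have hProb := M.μ_prob z
    have hz0 : M.μ z {ω : ℕ → V | ω 0 ≠ z} = 0 := by
      refine measure_mono_null (fun ω hω => ?_)
        (measure_iUnion_null (s := fun x : {x : V // x ≠ z} =>
          cylSet (fun _ => (x : V)) 0) fun x => ?_)
      · exact Set.mem_iUnion.2 ⟨⟨ω 0, hω⟩, fun i hi => by interval_cases i; rfl⟩
      · rw [cyl_eq]
        simp [x.2]
    have hE := subset_toMeasurable (M.μ z) (cylSet (wd z y) 1)
    set E := toMeasurable (M.μ z) (cylSet (wd z y) 1) with hEdef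
    have hEmeas : MeasurableSet E := measurableSet_toMeasurable _ _
    have hEval : M.μ z E = ENNReal.ofReal c := by
      rw [hEdef, measure_toMeasurable, hcylval]
    have hE' : cylSet (wd z y') 1 ⊆ E := by
      rw [← hswapcyl z, ← swap_preimage_eq y y' hsep E hEmeas]
      exact Set.preimage_mono hE
    have hcover : (Set.univ : Set (ℕ → V)) ⊆ {ω : ℕ → V | ω 0 ≠ z} ∪ E ∪
        ⋃ (x : {x : V // x ∉ ({y, y'} : Finset V)}), cylSet (wd z (x : V)) 1 := by
      intro ω _
      by_cases h0 : ω 0 = z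
      · rcases eq_or_ne (ω 1) y with h1 | h1
        · exact Or.inl (Or.inr (hE ((hcylY z y).symm ▸ ⟨h0, h1⟩)))
        rcases eq_or_ne (ω 1) y' with h1' | h1'
        · exact Or.inl (Or.inr (hE' ((hcylY z y').symm ▸ ⟨h0, h1'⟩)))
        · refine Or.inr (Set.mem_iUnion.2 ⟨⟨ω 1, by simp [Finset.mem_insert, h1, h1']⟩, ?_⟩)
          rw [hcylY]
          exact ⟨h0, rfl⟩
      · exact Or.inl (Or.inl h0)
    have hsummable := (M.p_row_sum z).summable
    have hsum2 : ∑ x ∈ ({y, y'} : Finset V), M.p z x = c + c := by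
      rw [Finset.sum_pair (fun h => hy' (h.symm ▸ rfl) : y ≠ y')]
      rw [← hp z, ← hcdef]
    have h2c : c + c ≤ 1 := by
      rw [← hsum2]
      exact sum_le_hasSum _ (fun x _ => M.p_nonneg z x) (M.p_row_sum z)
    have htail : ∑' (x : {x : V // x ∉ ({y, y'} : Finset V)}), M.p z (x : V) = 1 - (c + c) := by
      have := hsummable.sum_add_tsum_subtype_compl ({y, y'} : Finset V)
      rw [(M.p_row_sum z).tsum_eq, hsum2] at this
      linarith
    have hbound : (1 : ENNReal) ≤ ENNReal.ofReal c + ENNReal.ofReal (1 - (c + c)) := by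
      calc (1 : ENNReal) = M.μ z Set.univ := measure_univ.symm
      _ ≤ M.μ z ({ω : ℕ → V | ω 0 ≠ z} ∪ E ∪
          ⋃ (x : {x : V // x ∉ ({y, y'} : Finset V)}), cylSet (wd z (x : V)) 1) :=
        measure_mono hcover
      _ ≤ M.μ z ({ω : ℕ → V | ω 0 ≠ z} ∪ E) +
          M.μ z (⋃ (x : {x : V // x ∉ ({y, y'} : Finset V)}), cylSet (wd z (x : V)) 1) :=
        measure_union_le _ _
      _ ≤ (M.μ z {ω : ℕ → V | ω 0 ≠ z} + M.μ z E) +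
          ∑' (x : {x : V // x ∉ ({y, y'} : Finset V)}), M.μ z (cylSet (wd z (x : V)) 1) :=
        add_le_add (measure_union_le _ _) (measure_iUnion_le _)
      _ = ENNReal.ofReal c + ∑' (x : {x : V // x ∉ ({y, y'} : Finset V)}),
            ENNReal.ofReal (M.p z (x : V)) := by
        rw [hz0, hEval, zero_add]
        congr 1
        exact tsum_congr fun x => hcylval z (x : V)
      _ = ENNReal.ofReal c + ENNReal.ofReal (1 - (c + c)) := by
        congr 1
        rw [← htail]
        exact (ENNReal.ofReal_tsum_of_nonneg (fun x => M.p_nonneg z _)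
          (hsummable.subtype _)).symm
    rw [← ENNReal.ofReal_add hc.le (by linarith)] at hbound
    have := ENNReal.one_le_ofReal.1 hbound
    linarith
  -- step 2: assemble the singleton
  choose S hSmeas hSy hSy' using hsep
  have : ({y} : Set V) = ⋂ (y' : V) (h : y' ≠ y), S y' h := by
    ext x
    simp only [Set.mem_singleton_iff, Set.mem_iInter]
    constructor
    · rintro rfl y' h
      exact hSy y' h
    · intro h
      by_contra hx
      exact hSy' x hx (h x hx)
  rw [this]
  exact MeasurableSet.iInter fun y' => MeasurableSet.iInter fun h => hSmeas y' h

lemma allMeas (M : MarkovChain V) (s : Set V) : MeasurableSet s := by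
  rw [← Set.biUnion_of_singleton s]
  exact MeasurableSet.biUnion (Set.to_countable s) fun x _ => singleton_meas M x

/-- extension of a finite word to an infinite one -/
def seg (k : ℕ) (t : Fin (k+1) → V) : ℕ → V := fun i => t ⟨min i k, by omega⟩

lemma seg_eq (k : ℕ) (t : Fin (k+1) → V) (i : ℕ) (h : i ≤ k) :
    seg k t i = t ⟨i, by omega⟩ := by
  simp [seg, Nat.min_eq_left h]

lemma cyl_meas (M : MarkovChain V) (w : ℕ → V) (n : ℕ) : MeasurableSet (cylSet w n) := by
  have : cylSet w n = ⋂ (i : ℕ) (_ : i ≤ n), (fun ω : ℕ → V => ω i) ⁻¹' {w i} := by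
    ext ω
    simp [cylSet, Set.mem_iInter]
  rw [this]
  exact MeasurableSet.iInter fun i => MeasurableSet.iInter fun _ =>
    measurable_pi_apply i (allMeas M {w i})

lemma mem_own_cyl (n : ℕ) (ω : ℕ → V) : ω ∈ cylSet (seg n (fun i : Fin (n+1) => ω i)) n :=
  fun i hi => by rw [seg_eq n _ i hi]

lemma first0_null (M : MarkovChain V) (z : V) : M.μ z {ω : ℕ → V | ω 0 ≠ z} = 0 := by
  refine measure_mono_null (fun ω hω => ?_)
    (measure_iUnion_null (s := fun x : {x : V // x ≠ z} =>
      cylSet (fun _ => (x : V)) 0) fun x => ?_)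
  · exact Set.mem_iUnion.2 ⟨⟨ω 0, hω⟩, fun i hi => by interval_cases i; rfl⟩
  · rw [cyl_eq]
    simp [x.2]

lemma bad_null (M : MarkovChain V) (z : V) :
    M.μ z {ω : ℕ → V | ¬ (ω 0 = z ∧ ∀ n, 0 < M.p (ω n) (ω (n+1)))} = 0 := by
  have hsub : {ω : ℕ → V | ¬ (ω 0 = z ∧ ∀ n, 0 < M.p (ω n) (ω (n+1)))} ⊆
      {ω : ℕ → V | ω 0 ≠ z} ∪ ⋃ (n : ℕ),
        ⋃ (t : {t : Fin (n+2) → V // ¬ 0 < M.p (t ⟨n, by omega⟩) (t ⟨n+1, by omega⟩)}),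
          cylSet (seg (n+1) (t : Fin (n+2) → V)) (n+1) := by
    intro ω hω
    simp only [Set.mem_setOf_eq, not_and, not_forall] at hω
    by_cases h0 : ω 0 = z
    · obtain ⟨n, hn⟩ := hω h0
      refine Or.inr (Set.mem_iUnion.2 ⟨n, Set.mem_iUnion.2
        ⟨⟨fun i : Fin (n+2) => ω i, by simpa using hn⟩, ?_⟩⟩)
      exact mem_own_cyl (n+1) ω
    · exact Or.inl h0
  refine measure_mono_null hsub (measure_union_null (first0_null M z)
    (measure_iUnion_null fun n => measure_iUnion_null fun t => ?_))
  rw [cyl_eq]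
  split_ifs with h
  · have hfac : M.p (seg (n+1) (t : Fin (n+2) → V) n) (seg (n+1) (t : Fin (n+2) → V) (n+1)) = 0 := by
      rw [seg_eq _ _ n (by omega), seg_eq _ _ (n+1) le_rfl]
      have h1 := t.2
      have h2 := M.p_nonneg ((t : Fin (n+2) → V) ⟨n, by omega⟩) ((t : Fin (n+2) → V) ⟨n+1, by omega⟩)
      push_neg at h1
      linarith
    rw [Finset.prod_eq_zero (Finset.self_mem_range_succ n) hfac]
    simp
  · simp

/-- shift by k -/
def shf (k : ℕ) : (ℕ → V) → (ℕ → V) := fun ω n => ω (n + k)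

lemma shf_meas (k : ℕ) : Measurable (shf (V := V) k) :=
  measurable_pi_lambda _ fun n => measurable_pi_apply _

lemma tail_shift {A : Set (ℕ → V)}
    (hA : (fun ω : ℕ → V => fun n => ω (n + 1)) ⁻¹' A = A) (k : ℕ) :
    shf k ⁻¹' A = A := by
  induction k with
  | zero => rfl
  | succ k ih =>
    have : shf (V := V) (k+1) = shf k ∘ (fun ω : ℕ → V => fun n => ω (n + 1)) := rfl
    rw [this, Set.preimage_comp, ih, hA]

lemma pi_gen (M : MarkovChain V) :
    (inferInstance : MeasurableSpace (ℕ → V)) =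
      MeasurableSpace.generateFrom {s : Set (ℕ → V) | ∃ (n : ℕ) (w : ℕ → V), s = cylSet w n} := by
  refine le_antisymm ?_ (MeasurableSpace.generateFrom_le ?_)
  · rw [show (inferInstance : MeasurableSpace (ℕ → V)) = MeasurableSpace.pi from rfl,
      MeasurableSpace.pi_eq_generateFrom_projections]
    apply MeasurableSpace.generateFrom_le
    rintro _ ⟨i, A, hA, rfl⟩
    have heq : Function.eval i ⁻¹' A =
        ⋃ (t : {t : Fin (i+1) → V // t ⟨i, by omega⟩ ∈ A}), cylSet (seg i (t : Fin (i+1) → V)) i := by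
      ext ω
      constructor
      · intro h
        exact Set.mem_iUnion.2 ⟨⟨fun j : Fin (i+1) => ω j, h⟩, mem_own_cyl i ω⟩
      · intro h
        obtain ⟨t, ht⟩ := Set.mem_iUnion.1 h
        have := ht i le_rfl
        rw [seg_eq i _ i le_rfl] at this
        show ω i ∈ A
        rw [this]
        exact t.2
    rw [heq]
    exact MeasurableSet.iUnion fun t =>
      MeasurableSpace.measurableSet_generateFrom ⟨i, seg i (t : Fin (i+1) → V), rfl⟩
  · rintro _ ⟨n, w, rfl⟩
    exact cyl_meas M w n

lemma cyl_inter {n m : ℕ} {w u : ℕ → V} (h : n ≤ m) (hne : (cylSet w n ∩ cylSet u m).Nonempty) :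
    cylSet w n ∩ cylSet u m = cylSet u m := by
  obtain ⟨ω, hω1, hω2⟩ := hne
  have hwu : ∀ i ≤ n, w i = u i := fun i hi => (hω1 i hi).symm.trans (hω2 i (hi.trans h))
  ext x
  constructor
  · exact fun hx => hx.2
  · intro hx
    exact ⟨fun i hi => (hx i (hi.trans h)).trans (hwu i hi).symm, hx⟩

lemma cyl_piSystem :
    IsPiSystem {s : Set (ℕ → V) | ∃ (n : ℕ) (w : ℕ → V), s = cylSet w n} := by
  rintro _ ⟨n, w, rfl⟩ _ ⟨m, u, rfl⟩ hne
  rcases le_total n m with h | h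
  · rw [cyl_inter h hne]
    exact ⟨m, u, rfl⟩
  · rw [Set.inter_comm] at hne ⊢
    rw [cyl_inter h hne]
    exact ⟨n, w, rfl⟩

lemma markov (M : MarkovChain V) (z : V) (k : ℕ) (u : ℕ → V) {B : Set (ℕ → V)}
    (hB : MeasurableSet B) :
    M.μ z (cylSet u k ∩ shf k ⁻¹' B) = M.μ z (cylSet u k) * M.μ (u k) B := by
  have hprob : ∀ x, IsProbabilityMeasure (M.μ x) := M.μ_prob
  set ν₁ : Measure (ℕ → V) := ((M.μ z).restrict (cylSet u k)).map (shf k) with hν₁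
  set ν₂ : Measure (ℕ → V) := (M.μ z (cylSet u k)) • (M.μ (u k)) with hν₂
  have hν₁app : ∀ {s : Set (ℕ → V)}, MeasurableSet s → ν₁ s = M.μ z (shf k ⁻¹' s ∩ cylSet u k) := by
    intro s hs
    rw [hν₁, Measure.map_apply (shf_meas k) hs, Measure.restrict_apply (shf_meas k hs)]
  have hfin : IsFiniteMeasure ν₁ := by
    constructor
    rw [hν₁app MeasurableSet.univ]
    exact lt_of_le_of_lt (measure_mono (Set.subset_univ _)) (measure_lt_top _ _)
  have key : ν₁ = ν₂ := by
    refine MeasureTheory.ext_of_generate_finite _ (pi_gen M) cyl_piSystem ?_ ?_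
    · rintro _ ⟨n, w, rfl⟩
      rw [hν₁app (cyl_meas M w n), hν₂, Measure.smul_apply, smul_eq_mul]
      by_cases hw : w 0 = u k
      · set g : ℕ → V := fun i => if i ≤ k then u i else w (i - k) with hg
        have hint : shf k ⁻¹' cylSet w n ∩ cylSet u k = cylSet g (k + n) := by
          ext ω
          constructor
          · rintro ⟨h1, h2⟩ i hi
            by_cases hik : i ≤ k
            · rw [hg]
              simp only [hik, if_true]
              exact h2 i hik
            · push_neg at hik
              have h3 := h1 (i - k) (by omega)
              rw [hg]
              simp only [not_le.2 hik, if_false]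
              rw [← h3]
              show ω i = ω (i - k + k)
              congr 1
              omega
          · intro h
            constructor
            · intro i hi
              have := h (i + k) (by omega)
              rw [hg] at this
              rcases Nat.eq_zero_or_pos i with rfl | hipos
              · simp only [Nat.zero_add, le_refl, if_true] at this
                show ω (0 + k) = w 0
                rw [Nat.zero_add, this, hw]
              · have hik : ¬ (i + k ≤ k) := by omega
                simp only [hik, if_false] at this
                show ω (i + k) = w i
                rw [this]
                congr 1
                omega
            · intro i hi
              have := h i (by omega)
              rw [hg] at this
              simpa [hi] using this
        rw [hint, cyl_eq, cyl_eq, cyl_eq]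
        have hg0 : g 0 = u 0 := by simp [hg]
        rw [hg0, if_pos hw]
        have hsplit : ∏ i ∈ Finset.range (k + n), M.p (g i) (g (i + 1)) =
            (∏ i ∈ Finset.range k, M.p (u i) (u (i + 1))) *
              ∏ i ∈ Finset.range n, M.p (w i) (w (i + 1)) := by
          rw [Finset.prod_range_add]
          congr 1
          · refine Finset.prod_congr rfl fun i hi => ?_
            rw [Finset.mem_range] at hi
            rw [hg]
            simp only [show i ≤ k from by omega, if_true, show i + 1 ≤ k from by omega, if_true]
          · refine Finset.prod_congr rfl fun i hi => ?_
            rw [Finset.mem_range] at hi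
            congr 1
            · rcases Nat.eq_zero_or_pos i with rfl | hipos
              · rw [hg]
                simp only [Nat.add_zero, le_refl, if_true]
                exact hw.symm
              · rw [hg]
                simp only [show ¬ (k + i ≤ k) from by omega, if_false]
                congr 1
                omega
            · rw [hg]
              simp only [show ¬ (k + i + 1 ≤ k) from by omega, if_false]
              congr 1
              omega
        rw [hsplit]
        split_ifs with h0
        · rw [ENNReal.ofReal_mul (Finset.prod_nonneg fun i _ => M.p_nonneg _ _)]
        · simp
      · have hint : shf k ⁻¹' cylSet w n ∩ cylSet u k = ∅ := by
          ext ω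
          simp only [Set.mem_inter_iff, Set.mem_empty_iff_false, iff_false, not_and]
          intro h1 h2
          have ha : ω (0 + k) = w 0 := h1 0 (Nat.zero_le n)
          have hb := h2 k le_rfl
          rw [Nat.zero_add] at ha
          exact hw (ha.symm.trans hb)
        rw [hint, cyl_eq (M := M) (u k) n w, if_neg hw]
        simp
    · rw [hν₁app MeasurableSet.univ, hν₂, Measure.smul_apply, smul_eq_mul,
        Set.preimage_univ, Set.univ_inter, measure_univ, mul_one]
  rw [Set.inter_comm, ← hν₁app hB, key, hν₂, Measure.smul_apply, smul_eq_mul]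

lemma tailBig_path (M : MarkovChain V) (A : Set (ℕ → V)) (hA : IsTailEvent A)
    (ε κ : ℝ) (hε : 0 < ε) (hκ : κ ∈ Set.Ioc (0 : ℝ) 1) (hεκ : ε / κ ≤ 1/2)
    (U : Set V) (v : V) (hv : v ∈ tailBig M A ε)
    (hhit : κ ≤ (M.μ v {ω : ℕ → V | ∃ n, ω n ∈ U}).toReal) :
    ∃ (m : ℕ) (w : ℕ → V), w 0 = v ∧ w m ∈ U ∧
      (∀ i < m, 0 < M.p (w i) (w (i + 1))) ∧
      ∀ i ≤ m, w i ∈ tailBig M A (ε / κ) := by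
  have hprob : ∀ x, IsProbabilityMeasure (M.μ x) := M.μ_prob
  by_contra hcon
  set S : Set V := {x | ∃ (m : ℕ) (w : ℕ → V), w 0 = v ∧ w m = x ∧
    (∀ i < m, 0 < M.p (w i) (w (i + 1))) ∧ ∀ i ≤ m, w i ∈ tailBig M A (ε / κ)} with hSdef
  have hεκ' : ε ≤ ε / κ := by
    rw [le_div_iff₀ hκ.1]
    nlinarith [hκ.2, hε]
  have hmono : tailBig M A ε ⊆ tailBig M A (ε / κ) := fun x hx => by
    have hx' : (M.μ x A).toReal > 1 - ε := hx
    show (M.μ x A).toReal > 1 - ε / κ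
    linarith
  have hvS : v ∈ S := ⟨0, fun _ => v, rfl, rfl, fun i hi => absurd hi (by omega),
    fun i _ => hmono hv⟩
  have hSbig : S ⊆ tailBig M A (ε / κ) := by
    rintro x ⟨m, w, h0, hm, hpos, hbig⟩
    exact hm ▸ hbig m le_rfl
  have hSU : ∀ x ∈ S, x ∉ U := by
    rintro x ⟨m, w, h0, hm, hpos, hbig⟩ hxU
    exact hcon ⟨m, w, h0, by rw [hm]; exact hxU, hpos, hbig⟩
  have hext : ∀ x ∈ S, ∀ y, 0 < M.p x y → y ∈ tailBig M A (ε / κ) → y ∈ S := by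
    rintro x ⟨m, w, h0, hm, hpos, hbig⟩ y hpy hy
    refine ⟨m + 1, fun i => if i ≤ m then w i else y, by simp [h0], by simp, ?_, ?_⟩
    · intro i hi
      rcases lt_or_eq_of_le (Nat.lt_succ_iff.1 hi) with hi' | rfl
      · simpa [show i ≤ m from by omega, show i + 1 ≤ m from by omega] using hpos i hi'
      · simpa [show ¬ (i + 1 ≤ i) from by omega, hm] using hpy
    · intro i hi
      by_cases hi' : i ≤ m
      · simpa [hi'] using hbig i hi'
      · simpa [hi'] using hy
  -- the exit cylinders
  set Exit : (Σ k : ℕ, Fin (k+1) → V) → Prop := fun q =>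
    0 < q.1 ∧ (∀ i < q.1, seg q.1 q.2 i ∈ S) ∧ seg q.1 q.2 q.1 ∉ tailBig M A (ε / κ)
    with hExitdef
  set Cq : {q : Σ k : ℕ, Fin (k+1) → V // Exit q} → Set (ℕ → V) :=
    fun q => cylSet (seg q.1.1 q.1.2) q.1.1 with hCqdef
  set D : Set (ℕ → V) := ⋃ q, Cq q with hDdef
  have hdisj : Pairwise (Function.onFun Disjoint Cq) := by
    have key : ∀ (q q' : {q : Σ k : ℕ, Fin (k+1) → V // Exit q}), q.1.1 < q'.1.1 →
        ∀ ω, ω ∈ Cq q → ω ∈ Cq q' → False := by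
      intro q q' hlt ω h h'
      have h1 : ω q.1.1 = seg q.1.1 q.1.2 q.1.1 := h q.1.1 le_rfl
      have h2 : ω q.1.1 = seg q'.1.1 q'.1.2 q.1.1 := h' q.1.1 (by omega)
      exact q.2.2.2 (h1 ▸ h2 ▸ hSbig (q'.2.2.1 q.1.1 hlt))
    rintro ⟨⟨k, t⟩, hq⟩ ⟨⟨k', t'⟩, hq'⟩ hne
    rcases lt_trichotomy k k' with hlt | heq | hgt
    · exact Set.disjoint_left.2 fun ω h h' => key _ _ hlt ω h h'
    · subst heq
      refine Set.disjoint_left.2 fun ω h h' => hne ?_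
      have ht : t = t' := by
        funext i
        have h1 : ω i = seg k t i := h i (Nat.lt_succ_iff.1 i.isLt)
        have h2 : ω i = seg k t' i := h' i (Nat.lt_succ_iff.1 i.isLt)
        have h3 := h1.symm.trans h2
        rw [seg_eq k t i (Nat.lt_succ_iff.1 i.isLt), seg_eq k t' i (Nat.lt_succ_iff.1 i.isLt)] at h3
        simpa [Fin.eta] using h3
      subst ht
      rfl
    · exact Set.disjoint_left.2 fun ω h h' => key _ _ hgt ω h' h
  have hCmeas : ∀ q, MeasurableSet (Cq q) := fun q => cyl_meas M _ _
  have hDsum : M.μ v D = ∑' q, M.μ v (Cq q) := measure_iUnion hdisj hCmeas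
  set H : Set (ℕ → V) := {ω | ∃ n, ω n ∈ U} with hHdef
  have hcover : H ⊆ D ∪ {ω : ℕ → V | ¬ (ω 0 = v ∧ ∀ n, 0 < M.p (ω n) (ω (n+1)))} := by
    intro ω hω
    by_cases hg : ω 0 = v ∧ ∀ n, 0 < M.p (ω n) (ω (n+1))
    · left
      obtain ⟨n, hn⟩ := hω
      have hex : ∃ j, ω j ∉ S := ⟨n, fun hS => hSU _ hS hn⟩
      set k := Nat.find hex with hkdef
      have hk : ω k ∉ S := Nat.find_spec hex
      have hmin : ∀ j < k, ω j ∈ S := fun j hj => not_not.1 (Nat.find_min hex hj)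
      have hk0 : 0 < k := by
        rcases Nat.eq_zero_or_pos k with h0 | h0
        · exact absurd (hg.1 ▸ hvS : ω 0 ∈ S) (h0 ▸ hk)
        · exact h0
      have hnotbig : ω k ∉ tailBig M A (ε / κ) := by
        intro hb
        have hedge : 0 < M.p (ω (k-1)) (ω k) := by
          have := hg.2 (k-1)
          rwa [show k - 1 + 1 = k from by omega] at this
        exact hk (hext (ω (k-1)) (hmin _ (by omega)) (ω k) hedge hb)
      refine Set.mem_iUnion.2 ⟨⟨⟨k, fun i : Fin (k+1) => ω i⟩, hk0, ?_, ?_⟩, mem_own_cyl k ω⟩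
      · intro i hi
        rw [seg_eq k _ i (Nat.le_of_lt hi)]
        exact hmin i hi
      · rw [seg_eq k _ k le_rfl]
        exact hnotbig
    · right
      exact hg
  have hHmeas : MeasurableSet H := by
    have : H = ⋃ n : ℕ, (fun ω : ℕ → V => ω n) ⁻¹' U := by
      ext ω; simp [hHdef]
    rw [this]
    exact MeasurableSet.iUnion fun n => measurable_pi_apply n (allMeas M U)
  have h1 : ENNReal.ofReal κ ≤ M.μ v H :=
    (ENNReal.ofReal_le_ofReal hhit).trans_eq (ENNReal.ofReal_toReal (measure_ne_top _ _))
  have h2 : M.μ v H ≤ M.μ v D := by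
    calc M.μ v H ≤ M.μ v (D ∪ {ω : ℕ → V | ¬ (ω 0 = v ∧ ∀ n, 0 < M.p (ω n) (ω (n+1)))}) :=
      measure_mono hcover
    _ ≤ M.μ v D + M.μ v {ω : ℕ → V | ¬ (ω 0 = v ∧ ∀ n, 0 < M.p (ω n) (ω (n+1)))} :=
      measure_union_le _ _
    _ = M.μ v D := by rw [bad_null M v, add_zero]
  have hcompl : ∀ x : V, x ∉ tailBig M A (ε / κ) →
      ENNReal.ofReal (ε / κ) ≤ M.μ x Aᶜ := by
    intro x hx
    have hfin1 : M.μ x A ≠ ⊤ := measure_ne_top _ _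
    have hfin2 : M.μ x Aᶜ ≠ ⊤ := measure_ne_top _ _
    have hadd : (M.μ x A).toReal + (M.μ x Aᶜ).toReal = 1 := by
      have := measure_add_measure_compl (μ := M.μ x) hA.1
      rw [measure_univ] at this
      have := congrArg ENNReal.toReal this
      rwa [ENNReal.toReal_add hfin1 hfin2, ENNReal.toReal_one] at this
    have hx' : (M.μ x A).toReal ≤ 1 - ε / κ := by
      simp only [tailBig, Set.mem_setOf_eq, not_lt, gt_iff_lt] at hx
      linarith
    calc ENNReal.ofReal (ε / κ) ≤ ENNReal.ofReal ((M.μ x Aᶜ).toReal) :=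
      ENNReal.ofReal_le_ofReal (by linarith)
    _ = M.μ x Aᶜ := ENNReal.ofReal_toReal hfin2
  have h3 : ∀ q, ENNReal.ofReal (ε / κ) * M.μ v (Cq q) ≤ M.μ v (Cq q ∩ Aᶜ) := by
    intro q
    have hmar := markov M v q.1.1 (seg q.1.1 q.1.2) (B := Aᶜ) hA.1.compl
    rw [Set.preimage_compl, tail_shift hA.2 q.1.1] at hmar
    rw [show (Cq q ∩ Aᶜ : Set (ℕ → V)) = cylSet (seg q.1.1 q.1.2) q.1.1 ∩ Aᶜ from rfl, hmar]
    calc ENNReal.ofReal (ε / κ) * M.μ v (Cq q)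
        ≤ M.μ (seg q.1.1 q.1.2 q.1.1) Aᶜ * M.μ v (Cq q) :=
          mul_le_mul_left (hcompl _ q.2.2.2) _
    _ = M.μ v (cylSet (seg q.1.1 q.1.2) q.1.1) * M.μ (seg q.1.1 q.1.2 q.1.1) Aᶜ :=
          mul_comm _ _
  have h4 : M.μ v (D ∩ Aᶜ) = ∑' q, M.μ v (Cq q ∩ Aᶜ) := by
    rw [hDdef, Set.iUnion_inter]
    exact measure_iUnion
      (fun i j hij => ((hdisj hij).mono Set.inter_subset_left Set.inter_subset_left))
      (fun q => (hCmeas q).inter hA.1.compl)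
  have h5 : ENNReal.ofReal ε ≤ M.μ v Aᶜ := by
    calc ENNReal.ofReal ε = ENNReal.ofReal (ε / κ) * ENNReal.ofReal κ := by
          rw [← ENNReal.ofReal_mul (div_nonneg hε.le hκ.1.le)]
          congr 1
          field_simp
          exact (div_self (ne_of_gt hκ.1)).symm
    _ ≤ ENNReal.ofReal (ε / κ) * M.μ v D := mul_le_mul_right (h1.trans h2) _
    _ = ENNReal.ofReal (ε / κ) * ∑' q, M.μ v (Cq q) := by rw [hDsum]
    _ = ∑' q, ENNReal.ofReal (ε / κ) * M.μ v (Cq q) := ENNReal.tsum_mul_left.symm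
    _ ≤ ∑' q, M.μ v (Cq q ∩ Aᶜ) := ENNReal.tsum_le_tsum h3
    _ = M.μ v (D ∩ Aᶜ) := h4.symm
    _ ≤ M.μ v Aᶜ := measure_mono Set.inter_subset_right
  have h6 : M.μ v Aᶜ < ENNReal.ofReal ε := by
    have hfin1 : M.μ v A ≠ ⊤ := measure_ne_top _ _
    have hfin2 : M.μ v Aᶜ ≠ ⊤ := measure_ne_top _ _
    have hadd : (M.μ v A).toReal + (M.μ v Aᶜ).toReal = 1 := by
      have := measure_add_measure_compl (μ := M.μ v) hA.1
      rw [measure_univ] at this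
      have := congrArg ENNReal.toReal this
      rwa [ENNReal.toReal_add hfin1 hfin2, ENNReal.toReal_one] at this
    have hv' : (M.μ v A).toReal > 1 - ε := hv
    calc M.μ v Aᶜ = ENNReal.ofReal ((M.μ v Aᶜ).toReal) :=
      (ENNReal.ofReal_toReal hfin2).symm
    _ < ENNReal.ofReal ε := (ENNReal.ofReal_lt_ofReal_iff hε).2 (by linarith)
  exact absurd h5 (not_le.2 h6)

lemma tailSmall_eq_tailBig_compl (M : MarkovChain V) (A : Set (ℕ → V))
    (hA : MeasurableSet A) (r : ℝ) : tailSmall M A r = tailBig M Aᶜ r := by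
  ext x
  have hprob := M.μ_prob x
  have hfin1 : M.μ x A ≠ ⊤ := measure_ne_top _ _
  have hfin2 : M.μ x Aᶜ ≠ ⊤ := measure_ne_top _ _
  have hadd : (M.μ x A).toReal + (M.μ x Aᶜ).toReal = 1 := by
    have := measure_add_measure_compl (μ := M.μ x) hA
    rw [measure_univ] at this
    have := congrArg ENNReal.toReal this
    rwa [ENNReal.toReal_add hfin1 hfin2, ENNReal.toReal_one] at this
  simp only [tailSmall, tailBig, Set.mem_setOf_eq, gt_iff_lt]
  constructor <;> intro h <;> linarith

/-- If `v ∈ A_ε` and the chain started at `v` visits `U` with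
probability at least `κ`, then there is a `v`–`U` path (along positive transition
probabilities) all of whose vertices lie in `A_{ε/κ}`; and likewise with `Z` in
place of `A`. -/
theorem tail_event_path (M : MarkovChain V) (A : Set (ℕ → V)) (hA : IsTailEvent A)
    (ε κ : ℝ) (hε : 0 < ε) (hκ : κ ∈ Set.Ioc (0 : ℝ) 1) (hεκ : ε / κ ≤ 1/2)
    (U : Set V) :
    (∀ v ∈ tailBig M A ε,
      κ ≤ (M.μ v {ω : ℕ → V | ∃ n, ω n ∈ U}).toReal →
      ∃ (m : ℕ) (w : ℕ → V), w 0 = v ∧ w m ∈ U ∧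
        (∀ i < m, 0 < M.p (w i) (w (i + 1))) ∧
        ∀ i ≤ m, w i ∈ tailBig M A (ε / κ)) ∧
    (∀ v ∈ tailSmall M A ε,
      κ ≤ (M.μ v {ω : ℕ → V | ∃ n, ω n ∈ U}).toReal →
      ∃ (m : ℕ) (w : ℕ → V), w 0 = v ∧ w m ∈ U ∧
        (∀ i < m, 0 < M.p (w i) (w (i + 1))) ∧
        ∀ i ≤ m, w i ∈ tailSmall M A (ε / κ)) := by
  constructor
  · intro v hv hhit
    exact tailBig_path M A hA ε κ hε hκ hεκ U v hv hhit
  · intro v hv hhit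
    have hAc : IsTailEvent Aᶜ := ⟨hA.1.compl, by rw [Set.preimage_compl, hA.2]⟩
    rw [tailSmall_eq_tailBig_compl M A hA.1 ε] at hv
    obtain ⟨m, w, h0, hm, hpos, hbig⟩ :=
      tailBig_path M Aᶜ hAc ε κ hε hκ hεκ U v hv hhit
    refine ⟨m, w, h0, hm, hpos, fun i hi => ?_⟩
    rw [tailSmall_eq_tailBig_compl M A hA.1 (ε / κ)]
    exact hbig i hi
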